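/- Let A, B ∈ M_{k×n}(ℝ) with rank(A) = k and with QR decomposition A = L(A)π(A). There exist δ(n) > 0 and C(n) such that if |L(A)⁻¹(A − B)| ≤ δ for δ < δ(n), then B has rank k, |L(A)⁻¹L(B) − I_k| ≤ C(n)δ, and |π(A) − π(B)| ≤ C(n)δ. -/

import Mathlib

/-- Frobenius norm of a real matrix. -/
noncomputable def frob {k l : ℕ} (M : Matrix (Fin k) (Fin l) ℝ) : ℝ :=
  Real.sqrt (∑ i, ∑ j, (M i j) ^ 2)

open Matrix
namespace QRStab
attribute [local instance] Matrix.frobeniusSeminormedAddCommGroup Matrix.frobeniusNormedAddCommGroup Matrix.frobeniusNormedRing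

lemma frob_eq_norm {k l : ℕ} (M : Matrix (Fin k) (Fin l) ℝ) : frob M = ‖M‖ := by
  rw [Matrix.frobenius_norm_def, frob, Real.sqrt_eq_rpow]
  congr 1
  apply Finset.sum_congr rfl; intro i _
  apply Finset.sum_congr rfl; intro j _
  rw [Real.norm_eq_abs, show ((2:ℝ)) = ((2:ℕ):ℝ) by norm_num, Real.rpow_natCast, sq_abs]

lemma norm_sq_eq {k l : ℕ} (M : Matrix (Fin k) (Fin l) ℝ) : ‖M‖ ^ 2 = ∑ i, ∑ j, (M i j) ^ 2 := by
  rw [← frob_eq_norm, frob, Real.sq_sqrt]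
  positivity

lemma norm_entry_le {k l : ℕ} (M : Matrix (Fin k) (Fin l) ℝ) (i : Fin k) (j : Fin l) :
    |M i j| ≤ ‖M‖ := by
  rw [← frob_eq_norm, frob, ← Real.sqrt_sq_eq_abs]
  apply Real.sqrt_le_sqrt
  calc M i j ^ 2 ≤ ∑ j', (M i j') ^ 2 :=
        Finset.single_le_sum (f := fun j' => M i j' ^ 2) (fun j' _ => sq_nonneg _) (Finset.mem_univ j)
    _ ≤ ∑ i', ∑ j', (M i' j') ^ 2 :=
        Finset.single_le_sum (f := fun i' => ∑ j', (M i' j') ^ 2)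
          (fun i' _ => Finset.sum_nonneg fun j' _ => sq_nonneg _) (Finset.mem_univ i)

lemma norm_one_le {k n : ℕ} (hkn : k ≤ n) : ‖(1 : Matrix (Fin k) (Fin k) ℝ)‖ ≤ Real.sqrt n := by
  rw [← frob_eq_norm, frob]
  apply Real.sqrt_le_sqrt
  have : ∀ i : Fin k, ∑ j, ((1 : Matrix (Fin k) (Fin k) ℝ) i j) ^ 2 = 1 := by
    intro i
    rw [Finset.sum_eq_single i]
    · simp [Matrix.one_apply_eq]
    · intro j _ hj; simp [Matrix.one_apply_ne' hj]
    · simp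
  simp only [this, Finset.sum_const, Finset.card_univ, Fintype.card_fin, nsmul_eq_mul, mul_one]
  exact_mod_cast hkn

lemma norm_row_orth {k n : ℕ} (hkn : k ≤ n) (P : Matrix (Fin k) (Fin n) ℝ)
    (hP : P * P.transpose = 1) : ‖P‖ ≤ Real.sqrt n := by
  rw [← frob_eq_norm, frob]
  apply Real.sqrt_le_sqrt
  have : ∀ i : Fin k, ∑ j, (P i j) ^ 2 = 1 := by
    intro i
    have := congrFun (congrFun hP i) i
    simp [Matrix.mul_apply, Matrix.transpose_apply, Matrix.one_apply_eq] at this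
    rw [← this]
    exact Finset.sum_congr rfl fun j _ => (sq (P i j)).symm ▸ by ring
  simp only [this, Finset.sum_const, Finset.card_univ, Fintype.card_fin, nsmul_eq_mul, mul_one]
  exact_mod_cast hkn


variable {k : ℕ}

/-- lower-triangular "half" of a matrix -/
noncomputable def low (M : Matrix (Fin k) (Fin k) ℝ) : Matrix (Fin k) (Fin k) ℝ :=
  Matrix.of fun i j => if j < i then M i j else if i = j then M i j / 2 else 0

lemma low_tri (M : Matrix (Fin k) (Fin k) ℝ) (i j : Fin k) (h : i < j) : low M i j = 0 := by
  simp only [low, Matrix.of_apply, if_neg (asymm h), if_neg h.ne]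

lemma low_add_transpose (M : Matrix (Fin k) (Fin k) ℝ) (hM : Mᵀ = M) :
    low M + (low M)ᵀ = M := by
  ext i j
  simp only [Matrix.add_apply, Matrix.transpose_apply, low, Matrix.of_apply]
  rcases lt_trichotomy i j with h | h | h
  · rw [if_neg (asymm h), if_neg h.ne, if_pos h]
    have : M j i = M i j := by rw [← congrFun (congrFun hM j) i]; rfl
    rw [this]; ring
  · subst h; simp [lt_irrefl]
  · rw [if_pos h, if_neg (asymm h), if_neg h.ne]; ring

lemma low_sub (M N : Matrix (Fin k) (Fin k) ℝ) : low (M - N) = low M - low N := by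
  ext i j
  simp only [low, Matrix.of_apply, Matrix.sub_apply]
  split_ifs <;> ring

lemma norm_low_le (M : Matrix (Fin k) (Fin k) ℝ) : ‖low M‖ ≤ ‖M‖ := by
  rw [← frob_eq_norm, ← frob_eq_norm, frob, frob]
  apply Real.sqrt_le_sqrt
  apply Finset.sum_le_sum; intro i _
  apply Finset.sum_le_sum; intro j _
  simp only [low, Matrix.of_apply]
  split_ifs
  · exact le_refl _
  · nlinarith [sq_nonneg (M i j)]
  · nlinarith [sq_nonneg (M i j)]


lemma chol (S : Matrix (Fin k) (Fin k) ℝ) (hS : Sᵀ = S) (hSn : ‖S‖ ≤ 1/8) :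
    ∃ X : Matrix (Fin k) (Fin k) ℝ, (∀ i j, i < j → X i j = 0) ∧ ‖X‖ ≤ 2 * ‖S‖ ∧
      (1 + X) * (1 + X)ᵀ = 1 + S := by
  set F : Matrix (Fin k) (Fin k) ℝ → Matrix (Fin k) (Fin k) ℝ :=
    fun X => low (S - X * Xᵀ) with hF
  set s : Set (Matrix (Fin k) (Fin k) ℝ) :=
    {X | (∀ i j, i < j → X i j = 0) ∧ ‖X‖ ≤ 1/4} with hs
  have hcont : ∀ (i j : Fin k), Continuous fun X : Matrix (Fin k) (Fin k) ℝ => X i j := by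
    intro i j
    refine (LipschitzWith.of_dist_le_mul (K := 1) fun X Y => ?_).continuous
    rw [Real.dist_eq, dist_eq_norm, NNReal.coe_one, one_mul]
    exact norm_entry_le (X - Y) i j
  have hclosed : IsClosed s := by
    rw [hs, Set.setOf_and]
    apply IsClosed.inter
    · have : {X : Matrix (Fin k) (Fin k) ℝ | ∀ i j, i < j → X i j = 0} =
        ⋂ i, ⋂ j, ⋂ (_ : i < j), {X : Matrix (Fin k) (Fin k) ℝ | X i j = 0} := by
        ext X; simp [Set.mem_iInter]
      rw [this]
      refine isClosed_iInter fun i => isClosed_iInter fun j => isClosed_iInter fun _ => ?_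
      exact isClosed_eq (hcont i j) continuous_const
    · exact isClosed_le continuous_norm continuous_const
  have hcomplete : IsComplete s := hclosed.isComplete
  have hmaps : Set.MapsTo F s s := by
    intro X hX
    obtain ⟨hXt, hXn⟩ := hX
    constructor
    · exact fun i j h => low_tri _ i j h
    · calc ‖F X‖ ≤ ‖S - X * Xᵀ‖ := norm_low_le _
        _ ≤ ‖S‖ + ‖X * Xᵀ‖ := norm_sub_le _ _
        _ ≤ ‖S‖ + ‖X‖ * ‖Xᵀ‖ := by linarith [Matrix.frobenius_norm_mul X Xᵀ]
        _ ≤ 1/8 + (1/4) * (1/4) := by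
            rw [Matrix.frobenius_norm_transpose]
            have h0 : (0:ℝ) ≤ ‖X‖ := norm_nonneg _
            nlinarith
        _ ≤ 1/4 := by norm_num
  have hlip : ∀ X ∈ s, ∀ Y ∈ s, dist (F X) (F Y) ≤ (1/2) * dist X Y := by
    intro X hX Y hY
    rw [dist_eq_norm, dist_eq_norm]
    have key : F X - F Y = low (Y * Yᵀ - X * Xᵀ) := by
      rw [hF]
      simp only
      rw [← low_sub]
      congr 1
      abel
    rw [key]
    have h2 : Y * Yᵀ - X * Xᵀ = Y * (Yᵀ - Xᵀ) + (Y - X) * Xᵀ := by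
      noncomm_ring
    calc ‖low (Y * Yᵀ - X * Xᵀ)‖ ≤ ‖Y * Yᵀ - X * Xᵀ‖ := norm_low_le _
      _ ≤ ‖Y * (Yᵀ - Xᵀ)‖ + ‖(Y - X) * Xᵀ‖ := by rw [h2]; exact norm_add_le _ _
      _ ≤ ‖Y‖ * ‖Yᵀ - Xᵀ‖ + ‖Y - X‖ * ‖Xᵀ‖ := by
          linarith [Matrix.frobenius_norm_mul Y (Yᵀ - Xᵀ), Matrix.frobenius_norm_mul (Y - X) Xᵀ]
      _ ≤ (1/4) * ‖X - Y‖ + ‖X - Y‖ * (1/4) := by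
          have e1 : Yᵀ - Xᵀ = (Y - X)ᵀ := by rw [Matrix.transpose_sub]
          rw [e1, Matrix.frobenius_norm_transpose, Matrix.frobenius_norm_transpose, norm_sub_rev]
          have := hX.2; have := hY.2
          have h0 : (0:ℝ) ≤ ‖X - Y‖ := norm_nonneg _
          nlinarith
      _ = (1/2) * ‖X - Y‖ := by ring
  have hcontr : ContractingWith (1/2 : NNReal) (hmaps.restrict F s s) := by
    constructor
    · rw [← NNReal.coe_lt_coe]; norm_num
    · apply LipschitzWith.of_dist_le_mul
      rintro ⟨X, hX⟩ ⟨Y, hY⟩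
      have := hlip X hX Y hY
      simpa [Subtype.dist_eq] using this
  have h0s : (0 : Matrix (Fin k) (Fin k) ℝ) ∈ s := by
    constructor
    · intro i j _; rfl
    · simp
  obtain ⟨X, hXs, hXfix, -, -⟩ :=
    hcontr.exists_fixedPoint' hcomplete hmaps h0s (edist_ne_top _ _)
  have hfix : X = low (S - X * Xᵀ) := hXfix.symm
  have hXn : ‖X‖ ≤ 2 * ‖S‖ := by
    have h1 : ‖X‖ ≤ ‖S‖ + ‖X‖ * ‖X‖ := by
      calc ‖X‖ = ‖low (S - X * Xᵀ)‖ := by rw [← hfix]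
        _ ≤ ‖S - X * Xᵀ‖ := norm_low_le _
        _ ≤ ‖S‖ + ‖X‖ * ‖Xᵀ‖ := by
            linarith [norm_sub_le S (X * Xᵀ), Matrix.frobenius_norm_mul X Xᵀ]
        _ = ‖S‖ + ‖X‖ * ‖X‖ := by rw [Matrix.frobenius_norm_transpose]
    have h2 := hXs.2
    have h0 : (0:ℝ) ≤ ‖X‖ := norm_nonneg _
    nlinarith
  refine ⟨X, hXs.1, hXn, ?_⟩
  have hsym : (S - X * Xᵀ)ᵀ = S - X * Xᵀ := by
    rw [Matrix.transpose_sub, hS, Matrix.transpose_mul, Matrix.transpose_transpose]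
  have hXX : X + Xᵀ = S - X * Xᵀ := by
    have := low_add_transpose (S - X * Xᵀ) hsym
    rw [← hfix] at this
    exact this
  rw [Matrix.transpose_add, Matrix.transpose_one]
  have : (1 + X) * (1 + Xᵀ) = 1 + (X + Xᵀ + X * Xᵀ) := by noncomm_ring
  rw [this, hXX]
  abel

lemma det_lowerTri (T : Matrix (Fin k) (Fin k) ℝ) (h : ∀ i j, i < j → T i j = 0) :
    T.det = ∏ i, T i i :=
  Matrix.det_of_lowerTriangular T (fun i j hij => h i j (by exact hij))

end QRStab

section Main
open QRStab
attribute [local instance] Matrix.frobeniusSeminormedAddCommGroup Matrix.frobeniusNormedAddCommGroup Matrix.frobeniusNormedRing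
set_option maxHeartbeats 1000000

/-- Stability of the QR decomposition: if `A = L·P` is the QR decomposition of a
full-rank `A` and `|L⁻¹(A − B)| ≤ δ` is small, then `B` is full rank and its QR
factors are `C(n)δ`-close to those of `A`. -/
theorem qr_stability (n k : ℕ) (hkn : k ≤ n) :
    ∃ δ₀ > (0 : ℝ), ∃ C > (0 : ℝ), ∀ δ : ℝ, 0 < δ → δ < δ₀ →
      ∀ A B : Matrix (Fin k) (Fin n) ℝ,
      ∀ L : Matrix (Fin k) (Fin k) ℝ, ∀ P : Matrix (Fin k) (Fin n) ℝ,
        A.rank = k →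
        (∀ i j : Fin k, i < j → L i j = 0) →
        (∀ i : Fin k, 0 < L i i) →
        IsUnit L →
        P * P.transpose = 1 →
        A = L * P →
        frob (L⁻¹ * (A - B)) ≤ δ →
        B.rank = k ∧
        ∃ L' : Matrix (Fin k) (Fin k) ℝ, ∃ P' : Matrix (Fin k) (Fin n) ℝ,
          (∀ i j : Fin k, i < j → L' i j = 0) ∧
          (∀ i : Fin k, 0 < L' i i) ∧
          IsUnit L' ∧
          P' * P'.transpose = 1 ∧
          B = L' * P' ∧
          frob (L⁻¹ * L' - 1) ≤ C * δ ∧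
          frob (P - P') ≤ C * δ := by
  classical
  set sq := Real.sqrt n with hsqdef
  have hsq : 0 ≤ sq := Real.sqrt_nonneg _
  refine ⟨1 / (8 * (1 + 2*sq)), by positivity, 20 * (1 + sq)^3, by positivity, ?_⟩
  intro δ hδ hδ₀ A B L P hrank hLtri hLdiag hLunit hP hALP hfrob
  have hδ1 : δ ≤ 1 := by
    have h1 : (1:ℝ) / (8 * (1 + 2*sq)) ≤ 1 := by
      rw [div_le_one (by positivity)]; nlinarith
    linarith
  have hLdet : IsUnit L.det := (Matrix.isUnit_iff_isUnit_det L).mp hLunit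
  have hLinvL : L⁻¹ * L = 1 := Matrix.nonsing_inv_mul L hLdet
  have hLLinv : L * L⁻¹ = 1 := Matrix.mul_nonsing_inv L hLdet
  set E := L⁻¹ * (A - B) with hE
  have hEn : ‖E‖ ≤ δ := by rw [← frob_eq_norm]; exact hfrob
  set Q := P - E with hQ
  have hQB : Q = L⁻¹ * B := by
    rw [hQ, hE, Matrix.mul_sub, hALP, ← Matrix.mul_assoc, hLinvL, Matrix.one_mul]
    abel
  set S := Q * Qᵀ - 1 with hSdef
  have hSsym : Sᵀ = S := by
    rw [hSdef, Matrix.transpose_sub, Matrix.transpose_mul, Matrix.transpose_transpose,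
      Matrix.transpose_one]
  have hPn : ‖P‖ ≤ sq := norm_row_orth hkn P hP
  have hSexp : S = E * Eᵀ - E * Pᵀ - P * Eᵀ := by
    have h1 : Q * Qᵀ = P * Pᵀ - P * Eᵀ - E * Pᵀ + E * Eᵀ := by
      rw [hQ, Matrix.transpose_sub, Matrix.sub_mul, Matrix.mul_sub, Matrix.mul_sub]; abel
    rw [hSdef, h1, hP]; abel
  have hSn' : ‖S‖ ≤ (1 + 2*sq) * δ := by
    have h1 : ‖S‖ ≤ ‖E * Eᵀ‖ + ‖E * Pᵀ‖ + ‖P * Eᵀ‖ := by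
      rw [hSexp]
      calc ‖E * Eᵀ - E * Pᵀ - P * Eᵀ‖ ≤ ‖E * Eᵀ - E * Pᵀ‖ + ‖P * Eᵀ‖ := norm_sub_le _ _
        _ ≤ ‖E * Eᵀ‖ + ‖E * Pᵀ‖ + ‖P * Eᵀ‖ := by linarith [norm_sub_le (E * Eᵀ) (E * Pᵀ)]
    have h2 := Matrix.frobenius_norm_mul E Eᵀ
    have h3 := Matrix.frobenius_norm_mul E Pᵀ
    have h4 := Matrix.frobenius_norm_mul P Eᵀ
    rw [Matrix.frobenius_norm_transpose] at h2 h3 h4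
    have hE0 : (0:ℝ) ≤ ‖E‖ := norm_nonneg _
    nlinarith
  have hSn : ‖S‖ ≤ 1/8 := by
    have h1 : (1 + 2*sq) * δ ≤ (1 + 2*sq) * (1 / (8 * (1 + 2*sq))) :=
      mul_le_mul_of_nonneg_left (le_of_lt hδ₀) (by positivity)
    have h2 : (1 + 2*sq) * (1 / (8 * (1 + 2*sq))) = 1/8 := by
      field_simp
    linarith
  obtain ⟨X, hXtri, hXn, hXeq⟩ := chol S hSsym hSn
  have hXsmall : ‖X‖ ≤ 1/4 := by linarith
  set T : Matrix (Fin k) (Fin k) ℝ := 1 + X with hT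
  have hXT : X = T - 1 := by rw [hT]; abel
  have hTtri : ∀ i j : Fin k, i < j → T i j = 0 := by
    intro i j h
    rw [hT]
    simp [Matrix.add_apply, Matrix.one_apply_ne (ne_of_lt h), hXtri i j h]
  have hTdiag : ∀ i : Fin k, 0 < T i i := by
    intro i
    have h1 := norm_entry_le X i i
    have h2 := abs_le.mp (le_trans h1 hXsmall)
    rw [hT]
    simp only [Matrix.add_apply, Matrix.one_apply_eq]
    linarith [h2.1]
  have hTdetpos : 0 < T.det := by
    rw [det_lowerTri T hTtri]
    exact Finset.prod_pos fun i _ => hTdiag i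
  have hTd : IsUnit T.det := isUnit_iff_ne_zero.mpr (ne_of_gt hTdetpos)
  have hTunit : IsUnit T := (Matrix.isUnit_iff_isUnit_det T).mpr hTd
  have hTinvT : T⁻¹ * T = 1 := Matrix.nonsing_inv_mul T hTd
  have hTTinv : T * T⁻¹ = 1 := Matrix.mul_nonsing_inv T hTd
  set P' := T⁻¹ * Q with hP'def
  set L' := L * T with hL'def
  have hQQT : Q * Qᵀ = T * Tᵀ := by
    have h1 : Q * Qᵀ = 1 + S := by rw [hSdef]; abel
    rw [h1, ← hXeq, hT]
  have hP'orth : P' * P'ᵀ = 1 := by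
    rw [hP'def, Matrix.transpose_mul, Matrix.transpose_nonsing_inv]
    calc T⁻¹ * Q * (Qᵀ * Tᵀ⁻¹) = T⁻¹ * (Q * Qᵀ) * Tᵀ⁻¹ := by
          rw [Matrix.mul_assoc, Matrix.mul_assoc, Matrix.mul_assoc]
      _ = T⁻¹ * (T * Tᵀ) * Tᵀ⁻¹ := by rw [hQQT]
      _ = (T⁻¹ * T) * (Tᵀ * Tᵀ⁻¹) := by
          simp only [Matrix.mul_assoc]
      _ = 1 := by
          rw [hTinvT, Matrix.mul_nonsing_inv Tᵀ (by rwa [Matrix.det_transpose]), Matrix.one_mul]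
  have hBLP' : B = L' * P' := by
    rw [hL'def, hP'def]
    calc B = (L * L⁻¹) * B := by rw [hLLinv, Matrix.one_mul]
      _ = L * (L⁻¹ * B) := by rw [Matrix.mul_assoc]
      _ = L * ((T * T⁻¹) * (L⁻¹ * B)) := by rw [hTTinv, Matrix.one_mul]
      _ = L * T * (T⁻¹ * (L⁻¹ * B)) := by
          rw [Matrix.mul_assoc, Matrix.mul_assoc]
      _ = L * T * (T⁻¹ * Q) := by rw [← hQB]
  have hrankB : B.rank = k := by
    refine le_antisymm (le_trans B.rank_le_card_height (by simp)) ?_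
    have h1 : (P' * P'ᵀ).rank ≤ P'.rank := Matrix.rank_mul_le_left P' P'ᵀ
    rw [hP'orth, Matrix.rank_one, Fintype.card_fin] at h1
    have h2 : P' = (T⁻¹ * L⁻¹) * B := by rw [hP'def, hQB, Matrix.mul_assoc]
    have h3 : P'.rank ≤ B.rank := h2 ▸ Matrix.rank_mul_le_right (T⁻¹ * L⁻¹) B
    exact le_trans h1 h3
  refine ⟨hrankB, L', P', ?_, ?_, hLunit.mul hTunit, hP'orth, hBLP', ?_, ?_⟩
  · -- L' lower triangular
    intro i j h
    rw [hL'def, Matrix.mul_apply]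
    apply Finset.sum_eq_zero
    intro l _
    rcases le_or_gt l i with hl | hl
    · rw [hTtri l j (lt_of_le_of_lt hl h), mul_zero]
    · rw [hLtri i l hl, zero_mul]
  · -- L' positive diagonal
    intro i
    have h1 : L' i i = L i i * T i i := by
      rw [hL'def, Matrix.mul_apply]
      apply Finset.sum_eq_single
      · intro l _ hl
        rcases lt_or_gt_of_ne hl with h | h
        · rw [hTtri l i h, mul_zero]
        · rw [hLtri i l h, zero_mul]
      · intro h; exact absurd (Finset.mem_univ i) h
    rw [h1]
    exact mul_pos (hLdiag i) (hTdiag i)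
  · -- frob (L⁻¹ * L' - 1) ≤ C * δ
    have h1 : L⁻¹ * L' - 1 = X := by
      rw [hL'def, ← Matrix.mul_assoc, hLinvL, Matrix.one_mul, hXT]
    rw [frob_eq_norm, h1]
    have : ‖X‖ ≤ 2 * ((1 + 2*sq) * δ) := by
      refine le_trans hXn ?_
      exact mul_le_mul_of_nonneg_left hSn' (by norm_num)
    refine le_trans this ?_
    nlinarith [mul_nonneg hδ.le hsq, mul_nonneg (mul_nonneg hδ.le hsq) hsq,
      mul_nonneg (mul_nonneg (mul_nonneg hδ.le hsq) hsq) hsq]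
  · -- frob (P - P') ≤ C * δ
    have hPP' : P - P' = T⁻¹ * (X * P + E) := by
      calc P - P' = T⁻¹ * (T * (P - P')) := by
            rw [← Matrix.mul_assoc, hTinvT, Matrix.one_mul]
        _ = T⁻¹ * (X * P + E) := by
            congr 1
            rw [hP'def, Matrix.mul_sub, ← Matrix.mul_assoc, hTTinv, Matrix.one_mul, hQ, hXT,
              Matrix.sub_mul, Matrix.one_mul]
            abel
    have hTinv_eq : T⁻¹ = 1 - T⁻¹ * X := by
      have h1 : T⁻¹ * (1 + X) = 1 := by rw [← hT]; exact hTinvT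
      rw [Matrix.mul_add, Matrix.mul_one] at h1
      rw [← h1]; abel
    have hTinvn : ‖T⁻¹‖ ≤ 2 * sq := by
      have h1 : ‖T⁻¹‖ ≤ ‖(1 : Matrix (Fin k) (Fin k) ℝ)‖ + ‖T⁻¹‖ * ‖X‖ := by
        calc ‖T⁻¹‖ = ‖(1 : Matrix (Fin k) (Fin k) ℝ) - T⁻¹ * X‖ := by rw [← hTinv_eq]
          _ ≤ ‖(1 : Matrix (Fin k) (Fin k) ℝ)‖ + ‖T⁻¹ * X‖ := norm_sub_le _ _
          _ ≤ ‖(1 : Matrix (Fin k) (Fin k) ℝ)‖ + ‖T⁻¹‖ * ‖X‖ := by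
              linarith [Matrix.frobenius_norm_mul T⁻¹ X]
      have h2 := norm_one_le (k := k) hkn
      have h3 : (0:ℝ) ≤ ‖T⁻¹‖ := norm_nonneg _
      have h4 : ‖T⁻¹‖ * ‖X‖ ≤ ‖T⁻¹‖ * (1/4) := mul_le_mul_of_nonneg_left hXsmall h3
      -- ‖T⁻¹‖ ≤ sq + ‖T⁻¹‖/4  ⇒  ‖T⁻¹‖ ≤ (4/3) sq ≤ 2 sq
      have h5 : ‖T⁻¹‖ ≤ sq + ‖T⁻¹‖ * (1/4) := by linarith
      linarith
    rw [frob_eq_norm, hPP']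
    have h1 : ‖X * P + E‖ ≤ ‖X‖ * ‖P‖ + ‖E‖ := by
      calc ‖X * P + E‖ ≤ ‖X * P‖ + ‖E‖ := norm_add_le _ _
        _ ≤ ‖X‖ * ‖P‖ + ‖E‖ := by linarith [Matrix.frobenius_norm_mul X P]
    have h2 := Matrix.frobenius_norm_mul T⁻¹ (X * P + E)
    have h3 : ‖X‖ ≤ 2 * ((1 + 2*sq) * δ) := by linarith
    have h4 : (0:ℝ) ≤ ‖T⁻¹‖ := norm_nonneg _
    have h5 : (0:ℝ) ≤ ‖X‖ := norm_nonneg _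
    have h6 : (0:ℝ) ≤ ‖P‖ := norm_nonneg _
    have h7 : (0:ℝ) ≤ ‖X * P + E‖ := norm_nonneg _
    -- ‖T⁻¹ * (XP + E)‖ ≤ 2sq * (2(1+2sq)δ * sq + δ) ≤ 20 (1+sq)^3 δ
    have h8 : ‖X‖ * ‖P‖ ≤ 2 * ((1 + 2*sq) * δ) * sq :=
      mul_le_mul h3 hPn h6 (by positivity)
    have h9 : ‖X * P + E‖ ≤ 2 * ((1 + 2*sq) * δ) * sq + δ := by linarith
    have h10 : ‖T⁻¹ * (X * P + E)‖ ≤ (2 * sq) * (2 * ((1 + 2*sq) * δ) * sq + δ) := by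
      calc ‖T⁻¹ * (X * P + E)‖ ≤ ‖T⁻¹‖ * ‖X * P + E‖ := h2
        _ ≤ (2 * sq) * (2 * ((1 + 2*sq) * δ) * sq + δ) := by
            apply mul_le_mul hTinvn h9 h7 (by positivity)
    refine le_trans h10 ?_
    nlinarith [mul_nonneg hδ.le hsq, mul_nonneg (mul_nonneg hδ.le hsq) hsq,
      mul_nonneg (mul_nonneg (mul_nonneg hδ.le hsq) hsq) hsq]


end Main
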